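/- Let p be a prime, let n_1, n_2 be positive integers, and let a_1, a_2, s be integers with 1 ≤ s ≤ a_1 and a_2 ≤ a_1. Let L = (ℤ/p^{a_1}ℤ)^{n_1} × (ℤ/p^{a_2}ℤ)^{n_2}, and let K be any cyclic subgroup of L of order p^s. Then at least one of the following holds: (i) L/K ≅ (ℤ/p^{a_1}ℤ)^{n_1−1} × (ℤ/p^{a_2}ℤ)^{n_2} × ℤ/p^{a_1−s}ℤ; (ii) s ≤ a_2 and L/K ≅ (ℤ/p^{a_1}ℤ)^{n_1} × (ℤ/p^{a_2}ℤ)^{n_2−1} × ℤ/p^{a_2−s}ℤ; (iii) there exists an integer b with a_2 − s < b < a_1 − s and 0 ≤ b ≤ a_2 such that L/K ≅ (ℤ/p^{a_1}ℤ)^{n_1−1} × ℤ/p^{a_1+a_2−s−b}ℤ × (ℤ/p^{a_2}ℤ)^{n_2−1} × ℤ/p^{b}ℤ. -/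

import Mathlib

lemma exists_norm {p : ℕ} (hp : p.Prime) (n a : ℕ) (hn : 0 < n) (u : Fin n → ZMod (p ^ a)) :
    ∃ c, c ≤ a ∧ ∃ i₀ : Fin n, ∃ e : (Fin n → ZMod (p ^ a)) ≃+ (Fin n → ZMod (p ^ a)),
      e u = Pi.single i₀ ((p : ZMod (p ^ a)) ^ c) := by
  haveI : NeZero (p ^ a) := ⟨pow_ne_zero _ hp.pos.ne'⟩
  by_cases hu : u = 0
  · refine ⟨a, le_refl a, ⟨0, hn⟩, AddEquiv.refl _, ?_⟩
    have : ((p : ZMod (p ^ a)) ^ a) = 0 := by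
      have : (((p ^ a : ℕ)) : ZMod (p ^ a)) = 0 := ZMod.natCast_self _
      push_cast at this; exact this
    simp [hu, this]
  · -- valuations
    set v : Fin n → ℕ := fun i => if u i = 0 then a else padicValNat p (u i).val with hv
    have hvlt : ∀ i, u i ≠ 0 → padicValNat p (u i).val < a := by
      intro i hi
      have hval : (u i).val ≠ 0 := fun h => hi ((ZMod.val_eq_zero _).mp h)
      have h1 : p ^ padicValNat p (u i).val ≤ (u i).val :=
        Nat.le_of_dvd (Nat.pos_of_ne_zero hval) pow_padicValNat_dvd
      have h2 : (u i).val < p ^ a := ZMod.val_lt _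
      exact (Nat.pow_lt_pow_iff_right hp.one_lt).mp (lt_of_le_of_lt h1 h2)
    have hne : (Finset.univ : Finset (Fin n)).Nonempty := ⟨⟨0, hn⟩, Finset.mem_univ _⟩
    set c := Finset.univ.inf' hne v with hc
    obtain ⟨i₀, -, hi₀⟩ := Finset.exists_mem_eq_inf' hne v
    have hca : c ≤ a := by
      rw [hc, hi₀, hv]; dsimp only
      split
      · exact le_refl a
      · exact le_of_lt (hvlt i₀ (by assumption))
    have hui₀ : u i₀ ≠ 0 := by
      intro h
      obtain ⟨j, hj⟩ : ∃ j, u j ≠ 0 := by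
        by_contra hall; push_neg at hall; exact hu (funext hall)
      have h1 : c ≤ v j := Finset.inf'_le v (Finset.mem_univ j)
      have h2 : v j < a := by rw [hv]; dsimp only; rw [if_neg hj]; exact hvlt j hj
      have h3 : c = a := by rw [hc, hi₀, hv]; dsimp only; rw [if_pos h]
      omega
    have hcv : c = padicValNat p (u i₀).val := by
      rw [hc, hi₀, hv]; dsimp only; rw [if_neg hui₀]
    have hdvd : ∀ i, p ^ c ∣ (u i).val := by
      intro i
      by_cases hi : u i = 0
      · rw [hi]; simp
      · refine dvd_trans (pow_dvd_pow p ?_) pow_padicValNat_dvd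
        have := Finset.inf'_le v (Finset.mem_univ i)
        rw [hv] at this; dsimp only at this; rwa [if_neg hi] at this
    set w : Fin n → ZMod (p ^ a) := fun i => (((u i).val / p ^ c : ℕ) : ZMod (p ^ a)) with hwdef
    have hw : ∀ i, u i = (p : ZMod (p ^ a)) ^ c * w i := by
      intro i
      have : (p ^ c) * ((u i).val / p ^ c) = (u i).val := Nat.mul_div_cancel' (hdvd i)
      calc u i = (((u i).val : ℕ) : ZMod (p ^ a)) := by rw [ZMod.natCast_val, ZMod.cast_id]
        _ = (((p ^ c) * ((u i).val / p ^ c) : ℕ) : ZMod (p ^ a)) := by rw [this]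
        _ = (p : ZMod (p ^ a)) ^ c * w i := by push_cast; ring
    have hm : ¬ p ∣ (u i₀).val / p ^ c := by
      rw [hcv]
      have hval : (u i₀).val ≠ 0 := fun h => hui₀ ((ZMod.val_eq_zero _).mp h)
      have := Nat.not_dvd_ordCompl hp hval
      rwa [Nat.factorization_def _ hp] at this
    have hwu : IsUnit (w i₀) := by
      exact (ZMod.isUnit_iff_coprime _ _).mpr ((hp.coprime_iff_not_dvd.mpr hm).symm.pow_right a)
    set ε := hwu.unit with hε
    have hεw : (ε : ZMod (p ^ a)) = w i₀ := hwu.unit_spec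
    set d : Fin n → ZMod (p ^ a) := (↑ε⁻¹ : ZMod (p ^ a)) • w - Pi.single i₀ 1 with hd
    have hd0 : d i₀ = 0 := by
      rw [hd]
      simp only [Pi.sub_apply, Pi.smul_apply, Pi.single_eq_same, smul_eq_mul]
      rw [← hεw, Units.inv_mul, sub_self]
    set T : (Fin n → ZMod (p ^ a)) ≃+ (Fin n → ZMod (p ^ a)) :=
      { toFun := fun f => f - f i₀ • d
        invFun := fun f => f + f i₀ • d
        left_inv := fun f => by
          have h : (f - f i₀ • d) i₀ = f i₀ := by
            simp [hd0]
          show (f - f i₀ • d) + ((f - f i₀ • d) i₀) • d = f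
          rw [h, sub_add_cancel]
        right_inv := fun f => by
          have h : (f + f i₀ • d) i₀ = f i₀ := by
            simp [hd0]
          show (f + f i₀ • d) - ((f + f i₀ • d) i₀) • d = f
          rw [h, add_sub_cancel_right]
        map_add' := fun f g => by
          show (f + g) - (f + g) i₀ • d = (f - f i₀ • d) + (g - g i₀ • d)
          simp only [Pi.add_apply, add_smul]
          abel } with hT
    have hTu : T u = Pi.single i₀ ((p : ZMod (p ^ a)) ^ c * (ε : ZMod (p ^ a))) := by
      funext j
      show u j - u i₀ * d j = _
      rw [hw j, hw i₀, hd]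
      simp only [Pi.sub_apply, Pi.smul_apply, smul_eq_mul]
      by_cases hj : j = i₀
      · subst hj
        rw [Pi.single_eq_same, Pi.single_eq_same, ← hεw, Units.inv_mul]
        ring
      · rw [Pi.single_eq_of_ne hj, Pi.single_eq_of_ne hj, ← hεw, sub_zero]
        have key : (ε : ZMod (p ^ a)) * ((↑ε⁻¹ : ZMod (p ^ a)) * w j) = w j := by
          rw [← mul_assoc, Units.mul_inv, one_mul]
        rw [mul_assoc, key, sub_self]
    set S : (Fin n → ZMod (p ^ a)) ≃+ (Fin n → ZMod (p ^ a)) :=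
      { toFun := fun f j => (if j = i₀ then (↑ε⁻¹ : ZMod (p ^ a)) else 1) * f j
        invFun := fun f j => (if j = i₀ then (ε : ZMod (p ^ a)) else 1) * f j
        left_inv := fun f => by
          funext j
          by_cases hj : j = i₀ <;>
            simp [hj, ← mul_assoc, Units.mul_inv, Units.inv_mul]
        right_inv := fun f => by
          funext j
          by_cases hj : j = i₀ <;>
            simp [hj, ← mul_assoc, Units.mul_inv, Units.inv_mul]
        map_add' := fun f g => by
          funext j
          simp [mul_add] } with hS
    refine ⟨c, hca, i₀, T.trans S, ?_⟩
    show S (T u) = _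
    rw [hTu]
    funext j
    show (if j = i₀ then (↑ε⁻¹ : ZMod (p ^ a)) else 1) * _ = _
    by_cases hj : j = i₀
    · subst hj
      rw [if_pos rfl, Pi.single_eq_same, Pi.single_eq_same, mul_comm ((p : ZMod (p ^ a)) ^ c),
        ← mul_assoc, Units.inv_mul, one_mul]
    · rw [if_neg hj, Pi.single_eq_of_ne hj, Pi.single_eq_of_ne hj, mul_zero]


lemma exists_psi_core {p : ℕ} (hp : p.Prime) (a₁ a₂ c₁ c₂ : ℕ) (h₁ : c₁ ≤ a₁) (h₂ : c₂ ≤ a₂)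
    (h : c₂ ≤ c₁) :
    ∃ f : ZMod (p ^ a₁) × ZMod (p ^ a₂) →+ ZMod (p ^ (min a₁ (a₂ + c₁ - c₂))) × ZMod (p ^ c₂),
      Function.Surjective f ∧ f ((p : ZMod (p ^ a₁)) ^ c₁, (p : ZMod (p ^ a₂)) ^ c₂) = 0 := by
  haveI : NeZero (p ^ a₁) := ⟨pow_ne_zero _ hp.pos.ne'⟩
  haveI : NeZero (p ^ a₂) := ⟨pow_ne_zero _ hp.pos.ne'⟩
  haveI : NeZero (p ^ c₂) := ⟨pow_ne_zero _ hp.pos.ne'⟩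
  haveI : NeZero (p ^ (min a₁ (a₂ + c₁ - c₂))) := ⟨pow_ne_zero _ hp.pos.ne'⟩
  set B := min a₁ (a₂ + c₁ - c₂) with hB
  have hBa₁ : B ≤ a₁ := min_le_left _ _
  set g₁ : ZMod (p ^ a₁) →+ ZMod (p ^ B) :=
    (ZMod.castHom (pow_dvd_pow p hBa₁) (ZMod (p ^ B))).toAddMonoidHom with hg₁
  have hkey : ((p : ZMod (p ^ B)) ^ (a₂ + c₁ - c₂)) = 0 := by
    have : (((p ^ (a₂ + c₁ - c₂) : ℕ)) : ZMod (p ^ B)) = 0 :=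
      (ZMod.natCast_eq_zero_iff _ _).mpr (pow_dvd_pow p (min_le_right _ _))
    push_cast at this; exact this
  have hg₂0 : (zmultiplesHom (ZMod (p ^ B)) (-((p : ZMod (p ^ B)) ^ (c₁ - c₂)))) ((p ^ a₂ : ℕ) : ℤ) = 0 := by
    rw [zmultiplesHom_apply, zsmul_eq_mul]
    push_cast
    rw [mul_neg, ← pow_add, show a₂ + (c₁ - c₂) = a₂ + c₁ - c₂ by omega, hkey, neg_zero]
  set g₂ : ZMod (p ^ a₂) →+ ZMod (p ^ B) :=
    ZMod.lift (p ^ a₂) ⟨zmultiplesHom (ZMod (p ^ B)) (-((p : ZMod (p ^ B)) ^ (c₁ - c₂))), hg₂0⟩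
    with hg₂
  have hg₂int : ∀ k : ℤ, g₂ ((k : ℤ) : ZMod (p ^ a₂)) = k • (-((p : ZMod (p ^ B)) ^ (c₁ - c₂))) :=
    fun k => ZMod.lift_coe _ _ k
  set g₃ : ZMod (p ^ a₂) →+ ZMod (p ^ c₂) :=
    (ZMod.castHom (pow_dvd_pow p h₂) (ZMod (p ^ c₂))).toAddMonoidHom with hg₃
  set f : ZMod (p ^ a₁) × ZMod (p ^ a₂) →+ ZMod (p ^ B) × ZMod (p ^ c₂) :=
    ((g₁.comp (AddMonoidHom.fst _ _)) + (g₂.comp (AddMonoidHom.snd _ _))).prod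
      (g₃.comp (AddMonoidHom.snd _ _)) with hf
  have hfapp : ∀ x y, f (x, y) = (g₁ x + g₂ y, g₃ y) := fun x y => rfl
  refine ⟨f, ?_, ?_⟩
  · rintro ⟨ξ, η⟩
    refine ⟨((((ξ.val + η.val * p ^ (c₁ - c₂) : ℕ)) : ZMod (p ^ a₁)),
            ((η.val : ℕ) : ZMod (p ^ a₂))), ?_⟩
    rw [hfapp]
    have e₃ : g₃ ((η.val : ℕ) : ZMod (p ^ a₂)) = η := by
      rw [hg₃]
      simp only [RingHom.toAddMonoidHom_eq_coe, AddMonoidHom.coe_coe, map_natCast]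
      rw [ZMod.natCast_val, ZMod.cast_id]
    have e₂ : g₂ ((η.val : ℕ) : ZMod (p ^ a₂)) = -((η.val : ZMod (p ^ B)) * (p : ZMod (p ^ B)) ^ (c₁ - c₂)) := by
      have := hg₂int (η.val : ℤ)
      push_cast at this ⊢
      rw [this, zsmul_eq_mul, mul_neg]
      push_cast
      ring_nf
    have e₁ : g₁ (((ξ.val + η.val * p ^ (c₁ - c₂) : ℕ)) : ZMod (p ^ a₁))
        = (ξ.val : ZMod (p ^ B)) + (η.val : ZMod (p ^ B)) * (p : ZMod (p ^ B)) ^ (c₁ - c₂) := by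
      rw [hg₁]
      simp only [RingHom.toAddMonoidHom_eq_coe, AddMonoidHom.coe_coe, map_natCast]
      push_cast
      ring
    rw [e₁, e₂, e₃]
    rw [Prod.mk.injEq]
    refine ⟨by rw [add_neg_cancel_right, ZMod.natCast_val, ZMod.cast_id], rfl⟩
  · rw [hfapp, Prod.mk.injEq]
    constructor
    · have e₁ : g₁ ((p : ZMod (p ^ a₁)) ^ c₁) = (p : ZMod (p ^ B)) ^ c₁ := by
        rw [hg₁]
        simp only [RingHom.toAddMonoidHom_eq_coe, AddMonoidHom.coe_coe, map_pow, map_natCast]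
      have e₂ : g₂ ((p : ZMod (p ^ a₂)) ^ c₂) = -((p : ZMod (p ^ B)) ^ c₁) := by
        have h0 : ((p : ZMod (p ^ a₂)) ^ c₂) = (((p ^ c₂ : ℕ) : ℤ) : ZMod (p ^ a₂)) := by push_cast; ring
        rw [h0, hg₂int, zsmul_eq_mul, mul_neg, neg_inj]
        push_cast
        rw [← pow_add, show c₂ + (c₁ - c₂) = c₁ by omega]
      rw [e₁, e₂, add_neg_cancel, Prod.fst_zero]
    · have : ((p : ZMod (p ^ a₂)) ^ c₂) = (((p ^ c₂ : ℕ)) : ZMod (p ^ a₂)) := by push_cast; ring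
      rw [this, hg₃]
      simp only [RingHom.toAddMonoidHom_eq_coe, AddMonoidHom.coe_coe, map_natCast]
      rw [Prod.snd_zero]
      exact (ZMod.natCast_eq_zero_iff _ _).mpr dvd_rfl

lemma exists_psi {p : ℕ} (hp : p.Prime) (a₁ a₂ c₁ c₂ B b : ℕ) (h₁ : c₁ ≤ a₁) (h₂ : c₂ ≤ a₂)
    (hb : b = min c₁ c₂) (hB : B = a₁ + a₂ - max (a₁ - c₁) (a₂ - c₂) - b) :
    ∃ f : ZMod (p ^ a₁) × ZMod (p ^ a₂) →+ ZMod (p ^ B) × ZMod (p ^ b),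
      Function.Surjective f ∧ f ((p : ZMod (p ^ a₁)) ^ c₁, (p : ZMod (p ^ a₂)) ^ c₂) = 0 := by
  rcases le_total c₂ c₁ with h | h
  · have hb' : b = c₂ := by omega
    have hB' : B = min a₁ (a₂ + c₁ - c₂) := by omega
    rw [hb', hB']
    exact exists_psi_core hp a₁ a₂ c₁ c₂ h₁ h₂ h
  · have hb' : b = c₁ := by omega
    have hB' : B = min a₂ (a₁ + c₂ - c₁) := by omega
    rw [hb', hB']
    obtain ⟨f, hfs, hf0⟩ := exists_psi_core hp a₂ a₁ c₂ c₁ h₂ h₁ h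
    refine ⟨f.comp (AddEquiv.prodComm.toAddMonoidHom), ?_, ?_⟩
    · exact hfs.comp (AddEquiv.prodComm).surjective
    · exact hf0

theorem stmt16 (p : ℕ) (hp : p.Prime) (n₁ n₂ : ℕ) (hn₁ : 0 < n₁) (hn₂ : 0 < n₂)
    (a₁ a₂ s : ℕ) (hs : 1 ≤ s) (hsa₁ : s ≤ a₁) (ha : a₂ ≤ a₁)
    (K : AddSubgroup ((Fin n₁ → ZMod (p ^ a₁)) × (Fin n₂ → ZMod (p ^ a₂))))
    (hKcyc : IsAddCyclic K) (hKcard : Nat.card K = p ^ s) :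
    Nonempty ((((Fin n₁ → ZMod (p ^ a₁)) × (Fin n₂ → ZMod (p ^ a₂))) ⧸ K) ≃+
        ((Fin (n₁ - 1) → ZMod (p ^ a₁)) × (Fin n₂ → ZMod (p ^ a₂)) ×
          ZMod (p ^ (a₁ - s)))) ∨
    (s ≤ a₂ ∧
      Nonempty ((((Fin n₁ → ZMod (p ^ a₁)) × (Fin n₂ → ZMod (p ^ a₂))) ⧸ K) ≃+
        ((Fin n₁ → ZMod (p ^ a₁)) × (Fin (n₂ - 1) → ZMod (p ^ a₂)) ×
          ZMod (p ^ (a₂ - s))))) ∨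
    (∃ b : ℕ, (a₂ : ℤ) - (s : ℤ) < (b : ℤ) ∧ (b : ℤ) < (a₁ : ℤ) - (s : ℤ) ∧ b ≤ a₂ ∧
      Nonempty ((((Fin n₁ → ZMod (p ^ a₁)) × (Fin n₂ → ZMod (p ^ a₂))) ⧸ K) ≃+
        ((Fin (n₁ - 1) → ZMod (p ^ a₁)) × ZMod (p ^ (a₁ + a₂ - s - b)) ×
          (Fin (n₂ - 1) → ZMod (p ^ a₂)) × ZMod (p ^ b)))) := by
  haveI : NeZero (p ^ a₁) := ⟨pow_ne_zero _ hp.pos.ne'⟩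
  haveI : NeZero (p ^ a₂) := ⟨pow_ne_zero _ hp.pos.ne'⟩
  obtain ⟨m₁, rfl⟩ := Nat.exists_eq_succ_of_ne_zero hn₁.ne'
  obtain ⟨m₂, rfl⟩ := Nat.exists_eq_succ_of_ne_zero hn₂.ne'
  -- generator of K
  obtain ⟨⟨x, hxK⟩, hxgen⟩ := hKcyc
  have hK : K = AddSubgroup.zmultiples x := by
    apply le_antisymm
    · intro y hy
      obtain ⟨k, hk⟩ := hxgen ⟨y, hy⟩
      exact AddSubgroup.mem_zmultiples_iff.mpr ⟨k, congrArg Subtype.val hk⟩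
    · exact AddSubgroup.zmultiples_le.mpr hxK
  have hordx : addOrderOf x = p ^ s := by
    rw [← Nat.card_zmultiples x, ← hK, hKcard]
  obtain ⟨c₁, hc₁, i₁, e₁, he₁⟩ := exists_norm hp (m₁ + 1) a₁ (Nat.succ_pos _) x.1
  obtain ⟨c₂, hc₂, i₂, e₂, he₂⟩ := exists_norm hp (m₂ + 1) a₂ (Nat.succ_pos _) x.2
  set Φ := AddEquiv.prodCongr e₁ e₂ with hΦ
  have hΦx : Φ x = (Pi.single i₁ ((p : ZMod (p ^ a₁)) ^ c₁),
      Pi.single i₂ ((p : ZMod (p ^ a₂)) ^ c₂)) := by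
    rw [hΦ]
    exact Prod.ext he₁ he₂
  -- order computation
  have hordz : ∀ (a c : ℕ), c ≤ a → addOrderOf ((p : ZMod (p ^ a)) ^ c) = p ^ (a - c) := by
    intro a c hca
    have h1 : ((p : ZMod (p ^ a)) ^ c) = ((p ^ c : ℕ) : ZMod (p ^ a)) := by push_cast; ring
    rw [h1, ZMod.addOrderOf_coe _ (pow_ne_zero _ hp.pos.ne'),
      Nat.gcd_eq_right (pow_dvd_pow p hca), Nat.pow_div hca hp.pos]
  have hmax : s = max (a₁ - c₁) (a₂ - c₂) := by
    have h0 : addOrderOf (Φ x) = addOrderOf x :=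
      addOrderOf_injective Φ.toAddMonoidHom Φ.injective x
    rw [hΦx, hordx, Prod.addOrderOf] at h0
    simp only at h0
    have hsingle : ∀ (n a : ℕ) (i : Fin n) (z : ZMod (p ^ a)),
        addOrderOf (Pi.single i z : Fin n → ZMod (p ^ a)) = addOrderOf z := fun n a i z =>
      addOrderOf_injective (AddMonoidHom.single (fun _ : Fin n => ZMod (p ^ a)) i)
        (Pi.single_injective (M := fun _ : Fin n => ZMod (p ^ a)) i) z
    rw [hsingle, hsingle] at h0
    rw [hordz a₁ c₁ hc₁, hordz a₂ c₂ hc₂] at h0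
    have hlcm : Nat.lcm (p ^ (a₁ - c₁)) (p ^ (a₂ - c₂)) = p ^ (max (a₁ - c₁) (a₂ - c₂)) := by
      apply Nat.dvd_antisymm
      · exact Nat.lcm_dvd (pow_dvd_pow p (le_max_left _ _)) (pow_dvd_pow p (le_max_right _ _))
      · rcases le_total (a₁ - c₁) (a₂ - c₂) with h | h
        · rw [max_eq_right h]; exact Nat.dvd_lcm_right _ _
        · rw [max_eq_left h]; exact Nat.dvd_lcm_left _ _
    rw [hlcm] at h0
    exact (Nat.pow_right_injective hp.two_le h0.symm)
  set b := min c₁ c₂ with hbdef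
  set B := a₁ + a₂ - s - b with hBdef
  haveI : NeZero (p ^ B) := ⟨pow_ne_zero _ hp.pos.ne'⟩
  haveI : NeZero (p ^ b) := ⟨pow_ne_zero _ hp.pos.ne'⟩
  obtain ⟨ψ, hψs, hψ0⟩ := exists_psi hp a₁ a₂ c₁ c₂ B b hc₁ hc₂ hbdef (by rw [hBdef, hmax])
  -- the big hom
  set F0 : (Fin (m₁ + 1) → ZMod (p ^ a₁)) × (Fin (m₂ + 1) → ZMod (p ^ a₂)) →+
      (Fin m₁ → ZMod (p ^ a₁)) × (Fin m₂ → ZMod (p ^ a₂)) × (ZMod (p ^ B) × ZMod (p ^ b)) :=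
    AddMonoidHom.mk' (fun z => (z.1 ∘ i₁.succAbove, z.2 ∘ i₂.succAbove, ψ (z.1 i₁, z.2 i₂)))
      (by
        intro z w
        refine Prod.ext rfl (Prod.ext rfl ?_)
        show ψ _ = ψ _ + ψ _
        rw [← map_add]
        rfl) with hF0
  have hF0app : ∀ z, F0 z = (z.1 ∘ i₁.succAbove, z.2 ∘ i₂.succAbove, ψ (z.1 i₁, z.2 i₂)) :=
    fun z => rfl
  have hF0surj : Function.Surjective F0 := by
    rintro ⟨h₁f, h₂f, t⟩
    obtain ⟨⟨α, β⟩, hαβ⟩ := hψs t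
    refine ⟨(i₁.insertNth α h₁f, i₂.insertNth β h₂f), ?_⟩
    rw [hF0app]
    refine Prod.ext ?_ (Prod.ext ?_ ?_)
    · funext j
      exact Fin.insertNth_apply_succAbove (α := fun _ => ZMod (p ^ a₁)) i₁ α h₁f j
    · funext j
      exact Fin.insertNth_apply_succAbove (α := fun _ => ZMod (p ^ a₂)) i₂ β h₂f j
    · simp only [Fin.insertNth_apply_same]
      exact hαβ
  set F := F0.comp Φ.toAddMonoidHom with hF
  have hFs : Function.Surjective F := hF0surj.comp Φ.surjective
  have hFx : F x = 0 := by
    have : F x = F0 (Φ x) := rfl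
    rw [this, hΦx, hF0app]
    refine Prod.ext ?_ (Prod.ext ?_ ?_)
    · funext j
      exact Pi.single_eq_of_ne (Fin.succAbove_ne i₁ j) _
    · funext j
      exact Pi.single_eq_of_ne (Fin.succAbove_ne i₂ j) _
    · simp only [Pi.single_eq_same, Prod.snd_zero]
      exact hψ0
  -- kernel equals K
  have hKle : K ≤ F.ker := by
    rw [hK, AddSubgroup.zmultiples_le]
    exact AddMonoidHom.mem_ker.mpr hFx
  have hcardL : Nat.card ((Fin (m₁ + 1) → ZMod (p ^ a₁)) × (Fin (m₂ + 1) → ZMod (p ^ a₂)))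
      = p ^ (a₁ * (m₁ + 1) + a₂ * (m₂ + 1)) := by
    rw [Nat.card_prod, Nat.card_pi, Nat.card_pi]
    simp only [Nat.card_zmod, Finset.prod_const, Finset.card_univ, Fintype.card_fin]
    rw [← pow_mul, ← pow_mul, ← pow_add]
  have hcardT : Nat.card ((Fin m₁ → ZMod (p ^ a₁)) × (Fin m₂ → ZMod (p ^ a₂)) ×
      ZMod (p ^ B) × ZMod (p ^ b)) = p ^ (a₁ * m₁ + a₂ * m₂ + B + b) := by
    rw [Nat.card_prod, Nat.card_prod, Nat.card_prod, Nat.card_pi, Nat.card_pi]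
    simp only [Nat.card_zmod, Finset.prod_const, Finset.card_univ, Fintype.card_fin]
    rw [← pow_mul, ← pow_mul, ← pow_add, ← pow_add, ← pow_add]
    congr 1
    ring
  have hb₂ : b ≤ a₂ := le_trans (min_le_right _ _) hc₂
  have hexp : a₁ * (m₁ + 1) + a₂ * (m₂ + 1) = (a₁ * m₁ + a₂ * m₂ + B + b) + s := by
    have hBb : B + b + s = a₁ + a₂ := by omega
    calc a₁ * (m₁ + 1) + a₂ * (m₂ + 1) = (a₁ * m₁ + a₂ * m₂) + (a₁ + a₂) := by ring
      _ = (a₁ * m₁ + a₂ * m₂) + (B + b + s) := by rw [hBb]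
      _ = (a₁ * m₁ + a₂ * m₂ + B + b) + s := by ring
  have hq := AddSubgroup.card_eq_card_quotient_mul_card_addSubgroup F.ker
  have hqT : Nat.card ((((Fin (m₁ + 1) → ZMod (p ^ a₁)) × (Fin (m₂ + 1) → ZMod (p ^ a₂)))) ⧸ F.ker)
      = Nat.card ((Fin m₁ → ZMod (p ^ a₁)) × (Fin m₂ → ZMod (p ^ a₂)) ×
        ZMod (p ^ B) × ZMod (p ^ b)) :=
    Nat.card_congr (QuotientAddGroup.quotientKerEquivOfSurjective F hFs).toEquiv
  have hcardker : Nat.card F.ker = p ^ s := by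
    rw [hqT, hcardT, hcardL, hexp, pow_add] at hq
    exact (Nat.eq_of_mul_eq_mul_left (pow_pos hp.pos _) hq.symm)
  have hKeq : K = F.ker := AddSubgroup.eq_of_le_of_card_ge hKle (by rw [hcardker, hKcard])
  have e : (((Fin (m₁ + 1) → ZMod (p ^ a₁)) × (Fin (m₂ + 1) → ZMod (p ^ a₂))) ⧸ K) ≃+
      ((Fin m₁ → ZMod (p ^ a₁)) × (Fin m₂ → ZMod (p ^ a₂)) × ZMod (p ^ B) × ZMod (p ^ b)) := by
    rw [hKeq]
    exact QuotientAddGroup.quotientKerEquivOfSurjective F hFs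
  have hbge : a₂ ≤ b + s := by omega
  have hble : b + s ≤ a₁ := by omega
  by_cases hcase1 : b + s = a₁
  · left
    have hB' : B = a₂ := by omega
    have hb' : b = a₁ - s := by omega
    rw [hB', hb'] at e
    refine ⟨e.trans (AddEquiv.prodCongr (AddEquiv.refl _) ?_)⟩
    exact
      { toFun := fun z => (Fin.cons z.2.1 z.1, z.2.2)
        invFun := fun y => (y.1 ∘ Fin.succ, (y.1 0, y.2))
        left_inv := fun z => by
          refine Prod.ext ?_ rfl
          funext j
          simp
        right_inv := fun y => by
          refine Prod.ext ?_ rfl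
          funext j
          refine Fin.cases ?_ (fun j => ?_) j <;> simp
        map_add' := fun z w => by
          refine Prod.ext ?_ rfl
          funext j
          refine Fin.cases ?_ (fun j => ?_) j <;> simp }
  by_cases hcase2 : b + s = a₂
  · right; left
    refine ⟨by omega, ?_⟩
    have hB' : B = a₁ := by omega
    have hb' : b = a₂ - s := by omega
    rw [hB', hb'] at e
    refine ⟨e.trans ?_⟩
    exact
      { toFun := fun z => (Fin.cons z.2.2.1 z.1, (z.2.1, z.2.2.2))
        invFun := fun y => (y.1 ∘ Fin.succ, (y.2.1, (y.1 0, y.2.2)))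
        left_inv := fun z => by
          refine Prod.ext ?_ (Prod.ext rfl (Prod.ext ?_ rfl))
          · funext j; simp
          · simp
        right_inv := fun y => by
          refine Prod.ext ?_ (Prod.ext rfl rfl)
          funext j
          refine Fin.cases ?_ (fun j => ?_) j <;> simp
        map_add' := fun z w => by
          refine Prod.ext ?_ rfl
          funext j
          refine Fin.cases ?_ (fun j => ?_) j <;> simp }
  · right; right
    refine ⟨b, by omega, by omega, hb₂, ?_⟩
    refine ⟨e.trans ?_⟩
    exact
      { toFun := fun z => (z.1, (z.2.2.1, (z.2.1, z.2.2.2)))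
        invFun := fun y => (y.1, (y.2.2.1, (y.2.1, y.2.2.2)))
        left_inv := fun z => rfl
        right_inv := fun y => rfl
        map_add' := fun z w => rfl }
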